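/- Let P(z) = I z^n + A_{n-1} z^{n-1} + ... + A_0 be monic with complex m×m coefficients, let i be minimal with A_{n-i} ≠ 0, and define T^{(L)}(z) = (I z^i − A_{n-i}) P(z). With any submultiplicative matrix norm satisfying ‖I‖ = 1, the Cauchy radius of T^{(L)} is at most the Cauchy radius of P, where the Cauchy radius of a monic matrix polynomial Σ B_j z^d + ... is the unique positive root of t^d − Σ_{j<d} ‖B_j‖ t^j. -/

import Mathlib

lemma poly_coeff_ext (N : ℕ) (c d : ℕ → ℂ)
    (h : ∀ z : ℂ, ∑ j ∈ Finset.range N, c j * z ^ j = ∑ j ∈ Finset.range N, d j * z ^ j) :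
    ∀ j < N, c j = d j := by
  intro t ht
  have hp : (∑ j ∈ Finset.range N, Polynomial.monomial j (c j))
      = ∑ j ∈ Finset.range N, Polynomial.monomial j (d j) := by
    apply Polynomial.funext
    intro z
    simp only [Polynomial.eval_finset_sum, Polynomial.eval_monomial]
    exact h z
  have h2 := congrArg (fun p => Polynomial.coeff p t) hp
  simpa [Polynomial.finset_sum_coeff, Polynomial.coeff_monomial, ht] using h2

lemma matrix_coeff_ext {m : ℕ} (N : ℕ) (C D : ℕ → Matrix (Fin m) (Fin m) ℂ)
    (h : ∀ z : ℂ, ∑ j ∈ Finset.range N, z ^ j • C j = ∑ j ∈ Finset.range N, z ^ j • D j) :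
    ∀ j < N, C j = D j := by
  intro t ht
  ext k l
  refine poly_coeff_ext N (fun j => C j k l) (fun j => D j k l) ?_ t ht
  intro z
  have h2 := congrFun (congrFun (h z) k) l
  simpa [Matrix.sum_apply, Matrix.smul_apply, smul_eq_mul, mul_comm] using h2




/-- Melman/Rahman–Schmeisser improvement for monic matrix polynomials: with
`P(z) = I z^n + A_{n-1} z^{n-1} + ⋯ + A_0`, `i` minimal with `A_{n-i} ≠ 0`, and
`T⁽ᴸ⁾(z) = (I z^i − A_{n-i}) P(z) = Σ_{j=0}^{n+i} B_j z^j`, for any submultiplicative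
matrix norm with `ν I = 1`, the Cauchy radius of `T⁽ᴸ⁾` (the unique positive root
`r_T` of `t^{n+i} − Σ_{j<n+i} ν(B_j) t^j`) is at most the Cauchy radius of `P`
(the unique positive root `r_P` of `t^n − Σ_{j<n} ν(A_j) t^j`). -/
theorem cauchy_radius_improvement (m n i : ℕ) (hn : 0 < n) (hi : 0 < i) (hin : i ≤ n)
    (A : ℕ → Matrix (Fin m) (Fin m) ℂ)
    (hmonic : A n = 1)
    (hAne : A (n - i) ≠ 0)
    (hmin : ∀ j, 0 < j → j < i → A (n - j) = 0)
    (ν : Matrix (Fin m) (Fin m) ℂ → ℝ)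
    (hzero : ∀ X, ν X = 0 ↔ X = 0)
    (hsmul : ∀ (c : ℂ) X, ν (c • X) = ‖c‖ * ν X)
    (htri : ∀ X Y, ν (X + Y) ≤ ν X + ν Y)
    (hmul : ∀ X Y, ν (X * Y) ≤ ν X * ν Y)
    (hone : ν 1 = 1)
    (B : ℕ → Matrix (Fin m) (Fin m) ℂ)
    (hB : ∀ z : ℂ, ∑ j ∈ Finset.range (n + i + 1), z ^ j • B j
      = (z ^ i • (1 : Matrix (Fin m) (Fin m) ℂ) - A (n - i)) *
          ∑ j ∈ Finset.range (n + 1), z ^ j • A j)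
    (rP rT : ℝ) (hrP : 0 < rP) (hrT : 0 < rT)
    (hrProot : rP ^ n - ∑ j ∈ Finset.range n, ν (A j) * rP ^ j = 0)
    (hrTroot : rT ^ (n + i) - ∑ j ∈ Finset.range (n + i), ν (B j) * rT ^ j = 0) :
    rT ≤ rP := by
  classical
  have hν0 : ν 0 = 0 := (hzero 0).mpr rfl
  have hνneg : ∀ X, ν (-X) = ν X := by
    intro X
    have := hsmul (-1) X
    simpa using this
  have hνnonneg : ∀ X, 0 ≤ ν X := by
    intro X
    have h1 := htri X (-X)
    rw [add_neg_cancel, hν0, hνneg] at h1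
    linarith
  -- the coefficients of T
  set D : ℕ → Matrix (Fin m) (Fin m) ℂ := fun j =>
    (if i ≤ j then A (j - i) else 0) - (if j ≤ n then A (n - i) * A j else 0) with hDdef
  have hB' : ∀ z : ℂ, ∑ j ∈ Finset.range (n + i + 1), z ^ j • B j
      = ∑ j ∈ Finset.range (n + i + 1), z ^ j • D j := by
    intro z
    rw [hB z]
    have e1 : (z ^ i • (1 : Matrix (Fin m) (Fin m) ℂ) - A (n - i)) *
        ∑ j ∈ Finset.range (n + 1), z ^ j • A j
        = (∑ j ∈ Finset.range (n + 1), z ^ (j + i) • A j)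
          - ∑ j ∈ Finset.range (n + 1), z ^ j • (A (n - i) * A j) := by
      rw [sub_mul, smul_mul_assoc, one_mul, Finset.smul_sum, Finset.mul_sum]
      congr 1
      · refine Finset.sum_congr rfl fun j _ => ?_
        rw [smul_smul, ← pow_add, Nat.add_comm i j]
      · refine Finset.sum_congr rfl fun j _ => ?_
        rw [mul_smul_comm]
    rw [e1]
    have e2 : ∑ j ∈ Finset.range (n + i + 1), z ^ j • D j
        = (∑ j ∈ Finset.range (n + i + 1), z ^ j • (if i ≤ j then A (j - i) else 0))
          - ∑ j ∈ Finset.range (n + i + 1), z ^ j • (if j ≤ n then A (n - i) * A j else 0) := by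
      rw [← Finset.sum_sub_distrib]
      refine Finset.sum_congr rfl fun j _ => ?_
      rw [hDdef, smul_sub]
    rw [e2]
    have first : ∑ j ∈ Finset.range (n + i + 1), z ^ j • (if i ≤ j then A (j - i) else 0)
        = ∑ j ∈ Finset.range (n + 1), z ^ (j + i) • A j := by
      rw [Finset.range_eq_Ico,
        ← Finset.sum_Ico_consecutive _ (Nat.zero_le i) (show i ≤ n + i + 1 by omega)]
      have e4 : ∑ j ∈ Finset.Ico 0 i, z ^ j • (if i ≤ j then A (j - i) else 0) = 0 := by
        apply Finset.sum_eq_zero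
        intro j hj
        simp only [Finset.mem_Ico] at hj
        rw [if_neg (by omega), smul_zero]
      rw [e4, zero_add, Finset.sum_Ico_eq_sum_range,
        show n + i + 1 - i = n + 1 from by omega]
      refine Finset.sum_congr rfl fun j hj => ?_
      rw [if_pos (by omega), show i + j - i = j from by omega,
        show i + j = j + i from by omega]
    have second : ∑ j ∈ Finset.range (n + i + 1), z ^ j • (if j ≤ n then A (n - i) * A j else 0)
        = ∑ j ∈ Finset.range (n + 1), z ^ j • (A (n - i) * A j) := by
      rw [← Finset.sum_subset (Finset.range_subset_range.mpr (show n + 1 ≤ n + i + 1 by omega))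
        (fun j hj hj2 => by
          simp only [Finset.mem_range] at hj hj2
          rw [if_neg (by omega), smul_zero])]
      exact Finset.sum_congr rfl fun j hj => by
        simp only [Finset.mem_range] at hj
        rw [if_pos (by omega)]
    rw [first, second]
  have hBD : ∀ j, j < n + i + 1 → B j = D j := matrix_coeff_ext (n + i + 1) B D hB'
  -- numeric part
  set a := ν (A (n - i)) with hadef
  have ha : 0 < a := by
    rcases lt_or_eq_of_le (hνnonneg (A (n - i))) with h | h
    · exact h
    · exact absurd ((hzero _).mp h.symm) hAne
  set S := ∑ j ∈ Finset.range (n - i), ν (A j) * rP ^ j with hSdef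
  have hSnn : 0 ≤ S := Finset.sum_nonneg fun j _ =>
    mul_nonneg (hνnonneg _) (le_of_lt (pow_pos hrP j))
  -- rP ^ n = S + a * rP ^ (n - i)
  have hPsum : ∑ j ∈ Finset.range n, ν (A j) * rP ^ j = S + a * rP ^ (n - i) := by
    rw [Finset.range_eq_Ico, ← Finset.sum_Ico_consecutive _ (Nat.zero_le (n - i))
      (by omega : n - i ≤ n), ← Finset.range_eq_Ico]
    congr 1
    rw [Finset.sum_eq_single (n - i)]
    · intro j hj hne
      simp only [Finset.mem_Ico] at hj
      have : A j = 0 := by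
        have := hmin (n - j) (by omega) (by omega)
        rwa [show n - (n - j) = j by omega] at this
      rw [this, hν0, zero_mul]
    · intro h
      exact absurd (Finset.mem_Ico.mpr ⟨le_refl _, by omega⟩) h
  have hrPn : rP ^ n = S + a * rP ^ (n - i) := by
    rw [← hPsum]; linarith [hrProot]
  -- bound on the B-sum at rP
  have hkey : ∑ j ∈ Finset.range (n + i), ν (B j) * rP ^ j ≤ rP ^ (n + i) := by
    have hsplit : ∑ j ∈ Finset.range (n + i), ν (B j) * rP ^ j
        = ∑ j ∈ Finset.range n, ν (B j) * rP ^ j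
          + ∑ j ∈ Finset.Ico n (n + i), ν (B j) * rP ^ j := by
      rw [Finset.range_eq_Ico, ← Finset.sum_Ico_consecutive _ (Nat.zero_le n)
        (by omega : n ≤ n + i), ← Finset.range_eq_Ico]
    have hIco0 : ∑ j ∈ Finset.Ico n (n + i), ν (B j) * rP ^ j = 0 := by
      apply Finset.sum_eq_zero
      intro j hj
      simp only [Finset.mem_Ico] at hj
      have hBj : B j = 0 := by
        rw [hBD j (by omega), hDdef]
        rcases eq_or_lt_of_le hj.1 with h | h
        · simp only
          rw [if_pos (by omega), if_pos (by omega), ← h, hmonic, mul_one,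
            show n - i = j - i by omega, sub_self]
        · simp only
          rw [if_pos (by omega), if_neg (by omega)]
          have hz : A (j - i) = 0 := by
            have := hmin (n - (j - i)) (by omega) (by omega)
            rwa [show n - (n - (j - i)) = j - i by omega] at this
          rw [hz, sub_zero]
      rw [hBj, hν0, zero_mul]
    have hbound : ∑ j ∈ Finset.range n, ν (B j) * rP ^ j
        ≤ ∑ j ∈ Finset.range n, ((if i ≤ j then ν (A (j - i)) else 0) + a * ν (A j)) * rP ^ j := by
      apply Finset.sum_le_sum
      intro j hj
      simp only [Finset.mem_range] at hj
      apply mul_le_mul_of_nonneg_right _ (le_of_lt (pow_pos hrP j))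
      rw [hBD j (by omega), hDdef]
      simp only
      rw [if_pos (by omega : j ≤ n)]
      have htr : ν ((if i ≤ j then A (j - i) else 0) - A (n - i) * A j)
          ≤ ν (if i ≤ j then A (j - i) else 0) + ν (A (n - i) * A j) := by
        have := htri (if i ≤ j then A (j - i) else 0) (-(A (n - i) * A j))
        rw [hνneg] at this
        simpa [sub_eq_add_neg] using this
      refine le_trans htr (add_le_add ?_ (hmul _ _))
      split <;> simp [hν0, hνnonneg]
    have hsum1 : ∑ j ∈ Finset.range n, (if i ≤ j then ν (A (j - i)) else 0) * rP ^ j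
        = rP ^ i * S := by
      rw [Finset.range_eq_Ico, ← Finset.sum_Ico_consecutive _ (Nat.zero_le i) hin]
      have e4 : ∑ j ∈ Finset.Ico 0 i, (if i ≤ j then ν (A (j - i)) else 0) * rP ^ j = 0 := by
        apply Finset.sum_eq_zero
        intro j hj
        simp only [Finset.mem_Ico] at hj
        rw [if_neg (by omega), zero_mul]
      rw [e4, zero_add, Finset.sum_Ico_eq_sum_range, hSdef, Finset.mul_sum]
      refine Finset.sum_congr (by congr 1) fun j hj => ?_
      rw [if_pos (by omega), show i + j - i = j by omega]
      rw [pow_add]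
      ring
    have hsum2 : ∑ j ∈ Finset.range n, (a * ν (A j)) * rP ^ j = a * rP ^ n := by
      rw [hrPn, ← hPsum, Finset.mul_sum]
      refine Finset.sum_congr rfl fun j _ => by ring
    have hexp : ∑ j ∈ Finset.range n, ((if i ≤ j then ν (A (j - i)) else 0) + a * ν (A j)) * rP ^ j
        = rP ^ i * S + a * rP ^ n := by
      rw [← hsum1, ← hsum2, ← Finset.sum_add_distrib]
      refine Finset.sum_congr rfl fun j _ => by ring
    have hfinal : rP ^ i * S + a * rP ^ n = rP ^ (n + i) := by
      have h2 : rP ^ n = rP ^ (n - i) * rP ^ i := by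
        rw [← pow_add, show n - i + i = n from by omega]
      calc rP ^ i * S + a * rP ^ n = rP ^ i * (S + a * rP ^ (n - i)) := by rw [h2]; ring
        _ = rP ^ i * rP ^ n := by rw [← hrPn]
        _ = rP ^ (n + i) := by rw [pow_add]; ring
    rw [hsplit, hIco0, add_zero]
    calc ∑ j ∈ Finset.range n, ν (B j) * rP ^ j
        ≤ rP ^ i * S + a * rP ^ n := by rw [← hexp]; exact hbound
      _ = rP ^ (n + i) := hfinal
  -- conclude
  by_contra hcon
  push_neg at hcon
  obtain ⟨k, hk⟩ : ∃ k, n + i = k + 1 := ⟨n + i - 1, by omega⟩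
  have hq : (1 : ℝ) ≤ rT / rP := (one_le_div hrP).mpr (le_of_lt hcon)
  have hTsum : rT ^ (n + i) = ∑ j ∈ Finset.range (n + i), ν (B j) * rT ^ j := by
    linarith [hrTroot]
  have hstep : ∑ j ∈ Finset.range (n + i), ν (B j) * rT ^ j
      ≤ (∑ j ∈ Finset.range (n + i), ν (B j) * rP ^ j) * (rT / rP) ^ k := by
    rw [Finset.sum_mul]
    apply Finset.sum_le_sum
    intro j hj
    simp only [Finset.mem_range] at hj
    have h1 : rT ^ j = rP ^ j * (rT / rP) ^ j := by
      rw [← mul_pow, mul_div_cancel₀ _ (ne_of_gt hrP)]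
    rw [h1, ← mul_assoc]
    apply mul_le_mul_of_nonneg_left _ (mul_nonneg (hνnonneg _) (le_of_lt (pow_pos hrP j)))
    exact pow_le_pow_right₀ hq (by omega)
  have hlast : (∑ j ∈ Finset.range (n + i), ν (B j) * rP ^ j) * (rT / rP) ^ k
      ≤ rP ^ (n + i) * (rT / rP) ^ k :=
    mul_le_mul_of_nonneg_right hkey (pow_nonneg (by positivity) k)
  have heval : rP ^ (n + i) * (rT / rP) ^ k = rP * rT ^ k := by
    have h3 : rP ^ k * (rT / rP) ^ k = rT ^ k := by
      rw [← mul_pow, mul_div_cancel₀ _ (ne_of_gt hrP)]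
    calc rP ^ (n + i) * (rT / rP) ^ k = rP ^ k * (rT / rP) ^ k * rP := by
          rw [hk, pow_succ]; ring
      _ = rT ^ k * rP := by rw [h3]
      _ = rP * rT ^ k := by ring
  have : rT ^ (n + i) ≤ rP * rT ^ k := by
    calc rT ^ (n + i) = _ := hTsum
      _ ≤ _ := hstep
      _ ≤ _ := hlast
      _ = _ := heval
  rw [hk, pow_succ] at this
  nlinarith [pow_pos hrT k]
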